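/- Let λ > 0 and s > 0, and define J : (s,∞) → ℝ by J(r) = 2π/log(r/s) + π·λ²·(r² − s²). Then J attains a unique global minimum on (s,∞) at the point r = F(s); that is, J(F(s)) < J(r) for every r ∈ (s,∞) with r ≠ F(s). -/

import Mathlib

open Real

/-- The Dirichlet energy `J r = 2π / log (r/s) + π λ² (r² − s²)` of Bernoulli's free
boundary problem for concentric circles attains its unique global minimum on `(s, ∞)`
at `r = F s`, where `F s` is the unique `r > s` with `λ r log (r/s) = 1`. -/
theorem energy_unique_minimizer (lam s F : ℝ) (hlam : 0 < lam) (hs : 0 < s)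
    (hF : F > s ∧ lam * F * Real.log (F / s) = 1)
    (J : ℝ → ℝ)
    (hJ : ∀ r : ℝ, J r = 2 * π / Real.log (r / s) + π * lam ^ 2 * (r ^ 2 - s ^ 2)) :
    ∀ r : ℝ, r > s → r ≠ F → J F < J r := by
  obtain ⟨hFs, hF2⟩ := hF
  have hFpos : 0 < F := hs.trans hFs
  intro r hr hrF
  have hrpos : 0 < r := hs.trans hr
  have ht : 0 < Real.log (r / s) := Real.log_pos ((one_lt_div hs).2 hr)
  have htF : 0 < Real.log (F / s) := Real.log_pos ((one_lt_div hs).2 hFs)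
  -- 2π / log(F/s) = 2π lam F
  have h0 : 2 * π / Real.log (F / s) = 2 * π * lam * F := by
    field_simp
    linear_combination (-(1:ℝ)) * hF2
  -- log(r/s) = log(r/F) + log(F/s)
  have hsum : Real.log (r / s) = Real.log (r / F) + Real.log (F / s) := by
    have h : r / s = r / F * (F / s) := by field_simp
    rw [h, Real.log_mul (div_pos hrpos hFpos).ne' (div_pos hFpos hs).ne']
  -- F log(r/F) < r - F
  have hFu : F * Real.log (r / F) < r - F := by
    have hne : r / F ≠ 1 := by
      intro h
      exact hrF (by field_simp at h; linarith)
    have hlog := Real.log_lt_sub_one_of_pos (div_pos hrpos hFpos) hne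
    have := mul_lt_mul_of_pos_left hlog hFpos
    have heq : F * (r / F - 1) = r - F := by field_simp
    linarith [heq ▸ this]
  -- key lower bound on 2π / log(r/s)
  have key : 4 * π * lam * F - 2 * π * lam ^ 2 * F ^ 2 * Real.log (r / s)
      ≤ 2 * π / Real.log (r / s) := by
    rw [le_div_iff₀ ht]
    nlinarith [mul_nonneg (by positivity : (0:ℝ) ≤ 2 * π)
      (sq_nonneg (1 - lam * F * Real.log (r / s))), Real.pi_pos]
  have h6 : 2 * π * lam ^ 2 * F ^ 2 * Real.log (r / s)
      = 2 * π * lam ^ 2 * F ^ 2 * Real.log (r / F) + 2 * π * lam * F := by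
    linear_combination 2 * π * lam ^ 2 * F ^ 2 * hsum + 2 * π * lam * F * hF2
  have h4 : 2 * π * lam ^ 2 * F ^ 2 * Real.log (r / F)
      < 2 * π * lam ^ 2 * F * (r - F) := by
    have hpos : 0 < 2 * π * lam ^ 2 * F := by positivity
    have := mul_lt_mul_of_pos_left hFu hpos
    nlinarith [this]
  have h5 : 0 ≤ π * lam ^ 2 * (r - F) ^ 2 := by positivity
  rw [hJ r, hJ F]
  nlinarith [key, h6, h4, h5, h0]
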